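/- arXiv:2308.11427 — 2 statements merged into one kernel-verified Lean document; each statement's English description precedes it below -/
import Mathlib

section
/- Let k be a field, n ≥ 2, and f a permutation of {1,…,n}. The center of the Yang–Baxter algebra A(k,X,r_f) of the permutation idempotent solution (X, r_f) is trivial, i.e. it equals k·1 (the image of the ground field). -/
noncomputable section

open FreeAlgebra

/-- The defining relations of the Yang–Baxter algebra of the permutation idempotent
solution `r_f(x,y) = (f(y), y)`. -/
def ybRel (k : Type*) [Field k] (n : ℕ) (f : Equiv.Perm (Fin n)) :
    FreeAlgebra k (Fin n) → FreeAlgebra k (Fin n) → Prop :=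
  fun a b => ∃ j p : Fin n, a = ι k j * ι k p ∧ b = ι k (f p) * ι k p

/-- The Yang–Baxter algebra `A(k, X, r_f)`. -/
abbrev YBA (k : Type*) [Field k] (n : ℕ) (f : Equiv.Perm (Fin n)) :=
  RingQuot (ybRel k n f)

/-! ### Auxiliary development -/

/-- The semigroup of nonempty reduced words: `⟨a, p⟩` represents the unique normal-form
word of length `a + 1` ending in the letter `p`. -/
@[ext]
structure YBS (n : ℕ) where
  len : ℕ
  last : Fin n

namespace YBS

instance (n : ℕ) : Mul (YBS n) := ⟨fun a b => ⟨a.len + b.len + 1, b.last⟩⟩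

lemma mul_def {n : ℕ} (a b : YBS n) : a * b = ⟨a.len + b.len + 1, b.last⟩ := rfl

instance (n : ℕ) : Semigroup (YBS n) where
  mul_assoc a b c := by
    simp only [mul_def]
    ext
    · simp; omega
    · simp

end YBS

/-- The monoid of reduced words (including the empty word). -/
abbrev YBM (n : ℕ) := WithOne (YBS n)

section Aux

variable (k : Type*) [Field k] (n : ℕ) (f : Equiv.Perm (Fin n))

/-- The image of the generator `x_i` in the Yang–Baxter algebra. -/
def Xgen (i : Fin n) : YBA k n f := RingQuot.mkAlgHom k (ybRel k n f) (ι k i)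

lemma Xgen_rel (j p : Fin n) :
    Xgen k n f j * Xgen k n f p = Xgen k n f (f p) * Xgen k n f p := by
  have h : ybRel k n f (ι k j * ι k p) (ι k (f p) * ι k p) := ⟨j, p, rfl, rfl⟩
  have := RingQuot.mkAlgHom_rel k h
  simpa only [Xgen, map_mul] using this

lemma Xgen_mul (p q : Fin n) : Xgen k n f p * Xgen k n f q = Xgen k n f q * Xgen k n f q := by
  conv_lhs => rw [Xgen_rel k n f p q]
  conv_rhs => rw [Xgen_rel k n f q q]

lemma Xgen_mul_pow (p q : Fin n) (l : ℕ) :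
    Xgen k n f p * Xgen k n f q ^ (l + 1) = Xgen k n f q ^ (l + 2) := by
  induction l with
  | zero => rw [pow_one, sq, Xgen_mul k n f p q]
  | succ l ih =>
      rw [show l + 1 + 1 = (l + 1) + 1 from rfl, pow_succ, ← mul_assoc, ih, ← pow_succ]

lemma Xgen_pow_mul_pow (p q : Fin n) (m l : ℕ) :
    Xgen k n f p ^ (m + 1) * Xgen k n f q ^ (l + 1) = Xgen k n f q ^ (m + l + 2) := by
  induction m generalizing l with
  | zero => simpa using Xgen_mul_pow k n f p q l
  | succ m ih =>
      rw [pow_succ, mul_assoc, Xgen_mul_pow k n f p q l, show l + 2 = (l + 1) + 1 from rfl,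
        ih (l + 1)]
      congr 1
      omega

/-- The semigroup homomorphism sending `⟨a, p⟩` to `x_p ^ (a+1)`. -/
def toYBmul : YBS n →ₙ* YBA k n f where
  toFun s := Xgen k n f s.last ^ (s.len + 1)
  map_mul' a b := by
    show Xgen k n f (a * b).last ^ ((a * b).len + 1) = _
    rw [YBS.mul_def, Xgen_pow_mul_pow k n f a.last b.last a.len b.len]

/-- The algebra morphism from the monoid algebra to the Yang–Baxter algebra. -/
def ψYB : MonoidAlgebra k (YBM n) →ₐ[k] YBA k n f :=
  MonoidAlgebra.lift k (YBA k n f) (YBM n) (WithOne.lift (toYBmul k n f))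

/-- The algebra morphism from the Yang–Baxter algebra to the monoid algebra. -/
def φYB : YBA k n f →ₐ[k] MonoidAlgebra k (YBM n) :=
  RingQuot.liftAlgHom k
    ⟨FreeAlgebra.lift k (fun i => MonoidAlgebra.single ((⟨0, i⟩ : YBS n) : YBM n) 1), by
      rintro _ _ ⟨j, p, rfl, rfl⟩
      simp only [map_mul, FreeAlgebra.lift_ι_apply, MonoidAlgebra.single_mul_single, one_mul,
        ← WithOne.coe_mul, YBS.mul_def]⟩

lemma φYB_Xgen (i : Fin n) :
    φYB k n f (Xgen k n f i) = MonoidAlgebra.single ((⟨0, i⟩ : YBS n) : YBM n) 1 := by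
  rw [Xgen, φYB, RingQuot.liftAlgHom_mkAlgHom_apply, FreeAlgebra.lift_ι_apply]

lemma ψYB_single (s : YBS n) :
    ψYB k n f (MonoidAlgebra.single (s : YBM n) 1) = Xgen k n f s.last ^ (s.len + 1) := by
  rw [ψYB, MonoidAlgebra.lift_single, one_smul, WithOne.lift_coe]
  rfl

lemma coe_pow_YBM (p : Fin n) (m : ℕ) :
    ((⟨0, p⟩ : YBS n) : YBM n) ^ (m + 1) = ((⟨m, p⟩ : YBS n) : YBM n) := by
  induction m with
  | zero => simp
  | succ m ih =>
      rw [pow_succ, ih, ← WithOne.coe_mul, YBS.mul_def]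
      rfl

lemma ψYB_φYB (a : YBA k n f) : ψYB k n f (φYB k n f a) = a := by
  have h : (ψYB k n f).comp (φYB k n f) = AlgHom.id k (YBA k n f) := by
    apply RingQuot.ringQuot_ext'
    apply FreeAlgebra.hom_ext
    funext i
    simp only [Function.comp_apply, AlgHom.coe_comp, AlgHom.coe_id, id_eq]
    show ψYB k n f (φYB k n f (Xgen k n f i)) = Xgen k n f i
    rw [φYB_Xgen, ψYB_single]
    simp
  exact DFunLike.congr_fun h a

lemma φYB_ψYB (b : MonoidAlgebra k (YBM n)) : φYB k n f (ψYB k n f b) = b := by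
  have h : ((φYB k n f).comp (ψYB k n f)) = AlgHom.id k (MonoidAlgebra k (YBM n)) := by
    apply MonoidAlgebra.algHom_ext
    intro x
    induction x using WithOne.recOneCoe with
    | one =>
        simp only [AlgHom.coe_comp, Function.comp_apply, AlgHom.coe_id, id_eq,
          ← MonoidAlgebra.one_def, map_one]
    | coe s =>
        simp only [AlgHom.coe_comp, Function.comp_apply, AlgHom.coe_id, id_eq]
        rw [ψYB_single, map_pow, φYB_Xgen, MonoidAlgebra.single_pow, one_pow, coe_pow_YBM]
    exact Subsingleton.elim _ _
  exact DFunLike.congr_fun h b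

/-- Key coefficient computation: a central element of the monoid algebra vanishes on
non-identity elements when `n ≥ 2`. -/
lemma central_coeff_zero (hn : 2 ≤ n) (w : MonoidAlgebra k (YBM n))
    (hw : ∀ b, b * w = w * b) (s : YBS n) : w.coeff ((s : YBM n)) = 0 := by
  obtain ⟨q, hq⟩ : ∃ q : Fin n, q ≠ s.last := by
    by_cases h : s.last = ⟨0, by omega⟩
    · exact ⟨⟨1, by omega⟩, by rw [h]; simp [Fin.ext_iff]⟩
    · exact ⟨⟨0, by omega⟩, fun hc => h hc.symm⟩
  set g : YBM n := ((⟨0, q⟩ : YBS n) : YBM n) with hg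
  set y : YBM n := ((⟨s.len + 1, s.last⟩ : YBS n) : YBM n) with hy
  have key := congrArg (fun v : MonoidAlgebra k (YBM n) => v.coeff y) (hw (MonoidAlgebra.single g (1 : k)))
  have hleft : (MonoidAlgebra.single g (1 : k) * w).coeff y = 1 * w.coeff ((s : YBM n)) := by
    apply MonoidAlgebra.single_mul_apply_aux
    intro a _
    induction a using WithOne.recOneCoe with
    | one =>
        rw [mul_one, hg, hy]
        constructor
        · intro h
          exfalso
          have h1 := congrArg YBS.len (WithOne.coe_inj.mp h)
          simp only at h1
          omega
        · intro h
          exact absurd h WithOne.one_ne_coe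
    | coe a =>
        rw [hg, hy, ← WithOne.coe_mul, WithOne.coe_inj, WithOne.coe_inj, YBS.mul_def]
        constructor
        · intro h
          have h1 := congrArg YBS.len h
          have h2 := congrArg YBS.last h
          simp only at h1 h2
          exact YBS.ext (by omega) h2
        · rintro rfl
          exact YBS.ext (by simp) rfl
  have hright : (w * MonoidAlgebra.single g (1 : k)).coeff y = 0 := by
    apply MonoidAlgebra.mul_single_apply_of_not_exists_mul
    rintro ⟨d, hd⟩
    induction d using WithOne.recOneCoe with
    | one =>
        rw [one_mul, hg, hy, WithOne.coe_inj] at hd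
        exact hq (congrArg YBS.last hd).symm
    | coe d =>
        rw [hg, hy, ← WithOne.coe_mul, WithOne.coe_inj, YBS.mul_def] at hd
        exact hq (congrArg YBS.last hd).symm
  have key2 : (1 : k) * w.coeff ((s : YBM n)) = 0 := by
    rw [← hleft, ← hright]; exact key
  simpa using key2

end Aux

/-- for `n ≥ 2` the center of the Yang–Baxter algebra `A(k,X,r_f)`
is trivial, i.e. it is `k·1`. -/
theorem stmt_13 (k : Type*) [Field k] (n : ℕ) (hn : 2 ≤ n) (f : Equiv.Perm (Fin n)) :
    Subalgebra.center k (YBA k n f) = ⊥ := by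
  refine le_antisymm ?_ bot_le
  intro z hz
  rw [Subalgebra.mem_center_iff] at hz
  set w := φYB k n f z with hwdef
  have hwc : ∀ b, b * w = w * b := by
    intro b
    have hb : b = φYB k n f (ψYB k n f b) := (φYB_ψYB k n f b).symm
    rw [hb, hwdef, ← map_mul, ← map_mul, hz]
  have hvanish : ∀ s : YBS n, w.coeff ((s : YBM n)) = 0 :=
    central_coeff_zero k n hn w hwc
  have hw1 : w = (MonoidAlgebra.single (1 : YBM n) (w.coeff 1)) := by
    ext a
    induction a using WithOne.recOneCoe with
    | one => simp
    | coe s =>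
        rw [hvanish s]
        exact (Finsupp.single_eq_of_ne' (fun h => WithOne.one_ne_coe h)).symm
  have h2 : (MonoidAlgebra.single (1 : YBM n) (w.coeff 1)) =
      algebraMap k (MonoidAlgebra k (YBM n)) (w.coeff 1) := by
    rw [Algebra.algebraMap_eq_smul_one, MonoidAlgebra.one_def, MonoidAlgebra.smul_single, smul_eq_mul,
      mul_one]
  have h3 : ψYB k n f w = algebraMap k (YBA k n f) (w.coeff 1) := by
    conv_lhs => rw [hw1, h2]
    exact AlgHom.commutes _ _
  rw [Algebra.mem_bot]
  exact ⟨w.coeff 1, h3.symm.trans (ψYB_φYB k n f z)⟩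

end
end

section
/- Let k be a field, n ≥ 1, f a permutation of {1,…,n}, A = A(k,X,r_f), and A⁺ the two-sided ideal of A generated by x₁,…,x_n. Every nonzero element a of A can be written uniquely in the normal basis as a = a₀ + Σ_{d=1}^{p} Σ_{i=1}^{n} α_{d i} x₁^{d−1} x_i with a₀, α_{d i} ∈ k. Then: (1) if a, b ∈ A are nonzero and a b = 0, then a, b ∈ A⁺ (i.e. a₀ = 0 and likewise for b) and Σ_{i=1}^{n} α_{d i} = 0 for every 1 ≤ d ≤ p; (2) conversely, if a ∈ A⁺ satisfies Σ_{i=1}^{n} α_{d i} = 0 for every d, then a b = 0 for every b ∈ A⁺. In particular, a nonzero a ∈ A is a left zero divisor if and only if a annihilates A⁺ from the left. -/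
noncomputable section

open FreeAlgebra

/-- The image of the generator `x_i` in `A(k, X, r_f)`. -/
def xgen (k : Type*) [Field k] (n : ℕ) (f : Equiv.Perm (Fin n)) (i : Fin n) :
    YBA k n f :=
  RingQuot.mkAlgHom k (ybRel k n f) (ι k i)

/-- The augmentation ideal `A⁺`, the two-sided ideal generated by `x₁, …, xₙ`. -/
def Aplus (k : Type*) [Field k] (n : ℕ) (f : Equiv.Perm (Fin n)) :
    TwoSidedIdeal (YBA k n f) :=
  TwoSidedIdeal.span (Set.range (xgen k n f))

/-! ### An explicit model of the Yang–Baxter algebra.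

The normal basis of `A(k,X,r_f)` is `{1} ∪ {x₁^{d-1} x_i}`.  We model `A` on the
vector space `k ⊕ (Fin n → k[X])`, where the element `x₁^d x_i` corresponds to the
polynomial `X^d` placed in column `i`. -/

open Polynomial in
/-- The model algebra: a scalar together with one polynomial per column. -/
structure Mdl (k : Type*) (n : ℕ) [Field k] where
  c : k
  R : Fin n → Polynomial k

namespace Mdl

open Polynomial

variable {k : Type*} [Field k] {n : ℕ}

/-- The sum of all columns. -/
def sig (a : Mdl k n) : Polynomial k := ∑ i, a.R i

instance : Zero (Mdl k n) := ⟨⟨0, 0⟩⟩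
instance : Add (Mdl k n) := ⟨fun a b => ⟨a.c + b.c, a.R + b.R⟩⟩
instance : Neg (Mdl k n) := ⟨fun a => ⟨-a.c, -a.R⟩⟩
instance : One (Mdl k n) := ⟨⟨1, 0⟩⟩
instance : Mul (Mdl k n) :=
  ⟨fun a b => ⟨a.c * b.c, fun j => C a.c * b.R j + C b.c * a.R j + X * sig a * b.R j⟩⟩

@[simp] lemma mk_c (c : k) (R : Fin n → Polynomial k) : (Mdl.mk c R).c = c := rfl
@[simp] lemma mk_R (c : k) (R : Fin n → Polynomial k) (j : Fin n) : (Mdl.mk c R).R j = R j := rfl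
@[simp] lemma zero_c : (0 : Mdl k n).c = 0 := rfl
@[simp] lemma zero_R (j : Fin n) : (0 : Mdl k n).R j = 0 := rfl
@[simp] lemma one_c : (1 : Mdl k n).c = 1 := rfl
@[simp] lemma one_R (j : Fin n) : (1 : Mdl k n).R j = 0 := rfl
@[simp] lemma add_c (a b : Mdl k n) : (a + b).c = a.c + b.c := rfl
@[simp] lemma add_R (a b : Mdl k n) (j : Fin n) : (a + b).R j = a.R j + b.R j := rfl
@[simp] lemma neg_c (a : Mdl k n) : (-a).c = -a.c := rfl
@[simp] lemma neg_R (a : Mdl k n) (j : Fin n) : (-a).R j = -a.R j := rfl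
@[simp] lemma mul_c (a b : Mdl k n) : (a * b).c = a.c * b.c := rfl
lemma mul_R (a b : Mdl k n) (j : Fin n) :
    (a * b).R j = C a.c * b.R j + C b.c * a.R j + X * sig a * b.R j := rfl

lemma ext {a b : Mdl k n} (h1 : a.c = b.c) (h2 : ∀ j, a.R j = b.R j) : a = b := by
  cases a; cases b
  simp only [mk.injEq]
  exact ⟨h1, funext h2⟩

@[simp] lemma sig_zero : sig (0 : Mdl k n) = 0 := by simp [sig]
@[simp] lemma sig_one : sig (1 : Mdl k n) = 0 := by simp [sig]
lemma sig_add (a b : Mdl k n) : sig (a + b) = sig a + sig b := by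
  simp [sig, Finset.sum_add_distrib]
lemma sig_mul (a b : Mdl k n) :
    sig (a * b) = C a.c * sig b + C b.c * sig a + X * sig a * sig b := by
  simp [sig, mul_R, Finset.sum_add_distrib, Finset.mul_sum]

instance : AddCommGroup (Mdl k n) where
  add_assoc a b c := ext (add_assoc _ _ _) (fun j => add_assoc _ _ _)
  zero_add a := ext (zero_add _) (fun j => zero_add _)
  add_zero a := ext (add_zero _) (fun j => add_zero _)
  add_comm a b := ext (add_comm _ _) (fun j => add_comm _ _)
  neg_add_cancel a := ext (neg_add_cancel _) (fun j => neg_add_cancel _)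
  nsmul := nsmulRec
  zsmul := zsmulRec

instance : Ring (Mdl k n) :=
  { (inferInstance : AddCommGroup (Mdl k n)),
    (inferInstance : Mul (Mdl k n)), (inferInstance : One (Mdl k n)) with
    left_distrib := fun a b c => ext (mul_add _ _ _)
      (fun j => by simp only [mul_R, add_R, add_c, Polynomial.C_add]; ring)
    right_distrib := fun a b c => ext (add_mul _ _ _)
      (fun j => by simp only [mul_R, add_R, add_c, sig_add, Polynomial.C_add]; ring)
    zero_mul := fun a => ext (zero_mul _)
      (fun j => by simp only [mul_R, zero_R, zero_c, map_zero, sig_zero]; ring)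
    mul_zero := fun a => ext (mul_zero _)
      (fun j => by simp only [mul_R, zero_R, zero_c, map_zero]; ring)
    mul_assoc := fun a b c => ext (mul_assoc _ _ _)
      (fun j => by simp only [mul_R, mul_c, sig_mul, map_mul]; ring)
    one_mul := fun a => ext (one_mul _)
      (fun j => by simp only [mul_R, one_R, one_c, map_one, sig_one]; ring)
    mul_one := fun a => ext (mul_one _)
      (fun j => by simp only [mul_R, one_R, one_c, map_one, sig_one, map_zero]; ring) }

/-- Inclusion of the base field. -/
def fromK : k →+* Mdl k n where
  toFun a := ⟨a, 0⟩
  map_one' := ext rfl (fun j => rfl)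
  map_mul' a b := ext rfl (fun j => by rw [mul_R]; simp [sig])
  map_zero' := rfl
  map_add' a b := ext rfl (fun j => by simp)

instance : Algebra k (Mdl k n) :=
  (fromK).toAlgebra' (fun a m => ext (mul_comm _ _) (fun j => by
    simp only [mul_R]
    show C a * m.R j + C m.c * 0 + X * (∑ i : Fin n, (0 : Polynomial k)) * m.R j
      = C m.c * 0 + C a * m.R j + X * sig m * 0
    simp))

lemma algebraMap_def : algebraMap k (Mdl k n) = fromK :=
  RingHom.algebraMap_toAlgebra' _ _

@[simp] lemma algebraMap_c (a : k) : (algebraMap k (Mdl k n) a).c = a := by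
  rw [algebraMap_def]; rfl
@[simp] lemma algebraMap_R (a : k) (j : Fin n) : (algebraMap k (Mdl k n) a).R j = 0 := by
  rw [algebraMap_def]; rfl

lemma smul_def' (a : k) (m : Mdl k n) : a • m = algebraMap k (Mdl k n) a * m :=
  Algebra.smul_def a m

@[simp] lemma smul_c (a : k) (m : Mdl k n) : (a • m).c = a * m.c := by
  rw [smul_def']; simp

lemma sig_algebraMap (a : k) : sig (algebraMap k (Mdl k n) a) = 0 := by
  simp [sig]

@[simp] lemma smul_R (a : k) (m : Mdl k n) (j : Fin n) : (a • m).R j = C a * m.R j := by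
  rw [smul_def', mul_R, sig_algebraMap]
  simp

lemma sig_smul (a : k) (m : Mdl k n) : sig (a • m) = C a * sig m := by
  simp [sig, Finset.mul_sum]

/-- The scalar component, as a ring homomorphism. -/
def cHom : Mdl k n →+* k where
  toFun := Mdl.c
  map_one' := rfl
  map_mul' _ _ := rfl
  map_zero' := rfl
  map_add' _ _ := rfl

/-- The column-sum, as a linear map. -/
def sigHom : Mdl k n →ₗ[k] Polynomial k where
  toFun := sig
  map_add' := sig_add
  map_smul' a m := by simp [sig_smul, smul_eq_C_mul]

lemma eq_zero_iff (m : Mdl k n) : m = 0 ↔ m.c = 0 ∧ ∀ j, m.R j = 0 := by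
  constructor
  · rintro rfl; exact ⟨rfl, fun j => rfl⟩
  · rintro ⟨h1, h2⟩; exact ext h1 (fun j => h2 j)

/-- The key combinatorial fact about zero divisors, proved in the model. -/
lemma key {u w : Mdl k n} (h : u * w = 0) (hu : u ≠ 0) (hw : w ≠ 0) :
    u.c = 0 ∧ w.c = 0 ∧ sig u = 0 := by
  have hc : u.c * w.c = 0 := by rw [← mul_c, h, zero_c]
  have hR : ∀ j, C u.c * w.R j + C w.c * u.R j + X * sig u * w.R j = 0 := by
    intro j; rw [← mul_R, h, zero_R]
  -- Step 1 : u.c = 0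
  have huc : u.c = 0 := by
    by_contra huc
    have hwc : w.c = 0 := by
      rcases mul_eq_zero.mp hc with h' | h'
      · exact absurd h' huc
      · exact h'
    have hfac : ∀ j, (C u.c + X * sig u) * w.R j = 0 := by
      intro j
      have := hR j
      rw [hwc] at this
      simp only [map_zero, zero_mul, add_zero] at this
      linear_combination this
    have hne : (C u.c + X * sig u) ≠ 0 := by
      intro hh
      apply huc
      have := congrArg (fun p => Polynomial.coeff p 0) hh
      simpa using this
    have hRw : ∀ j, w.R j = 0 := by
      intro j
      rcases mul_eq_zero.mp (hfac j) with h' | h'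
      · exact absurd h' hne
      · exact h'
    exact hw ((eq_zero_iff w).mpr ⟨hwc, hRw⟩)
  have hR' : ∀ j, C w.c * u.R j + X * sig u * w.R j = 0 := by
    intro j
    have := hR j
    rw [huc] at this
    simpa using this
  have hsum : sig u * (C w.c + X * sig w) = 0 := by
    have := Finset.sum_congr rfl (fun j (_ : j ∈ (Finset.univ : Finset (Fin n))) => hR' j)
    rw [Finset.sum_const_zero] at this
    rw [Finset.sum_add_distrib, ← Finset.mul_sum, ← Finset.mul_sum, ← sig, ← sig] at this
    linear_combination this
  rcases mul_eq_zero.mp hsum with hsu | hfac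
  · refine ⟨huc, ?_, hsu⟩
    by_contra hwc
    have hRu : ∀ j, u.R j = 0 := by
      intro j
      have := hR' j
      rw [hsu] at this
      simp only [mul_zero, zero_mul, add_zero] at this
      rcases mul_eq_zero.mp this with h' | h'
      · exact absurd (Polynomial.C_eq_zero.mp h') hwc
      · exact h'
    exact hu ((eq_zero_iff u).mpr ⟨huc, hRu⟩)
  · have hwc : w.c = 0 := by
      have := congrArg (fun p => Polynomial.coeff p 0) hfac
      simpa using this
    refine ⟨huc, hwc, ?_⟩
    have hsw : sig w = 0 := by
      rw [hwc, map_zero, zero_add] at hfac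
      rcases mul_eq_zero.mp hfac with h' | h'
      · exact absurd h' Polynomial.X_ne_zero
      · exact h'
    obtain ⟨j0, hj0⟩ : ∃ j, w.R j ≠ 0 := by
      by_contra hj
      push_neg at hj
      exact hw ((eq_zero_iff w).mpr ⟨hwc, hj⟩)
    have := hR' j0
    rw [hwc, map_zero, zero_mul, zero_add] at this
    rcases mul_eq_zero.mp this with h' | h'
    · rcases mul_eq_zero.mp h' with h'' | h''
      · exact absurd h'' Polynomial.X_ne_zero
      · exact h''
    · exact absurd h' hj0

end Mdl

/-! ### Basic computations in the Yang–Baxter algebra -/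

section YBAlemmas

open Polynomial

variable (k : Type*) [Field k] (n : ℕ) [NeZero n] (f : Equiv.Perm (Fin n))

lemma xgen_mul (j p : Fin n) :
    xgen k n f j * xgen k n f p = xgen k n f 0 * xgen k n f p := by
  have h : ∀ j : Fin n, xgen k n f j * xgen k n f p
      = RingQuot.mkAlgHom k (ybRel k n f) (ι k (f p) * ι k p) := by
    intro j
    rw [xgen, xgen, ← map_mul]
    exact RingQuot.mkAlgHom_rel k ⟨j, p, rfl, rfl⟩
  rw [h j, h 0]

/-- The normal-basis element `x₁^d x_i`. -/
def vb (d : ℕ) (i : Fin n) : YBA k n f := xgen k n f 0 ^ d * xgen k n f i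

lemma vb_zero (i : Fin n) : vb k n f 0 i = xgen k n f i := by
  rw [vb, pow_zero, one_mul]

lemma vb_succ (e : ℕ) (j : Fin n) :
    vb k n f (e + 1) j = xgen k n f 0 * vb k n f e j := by
  rw [vb, vb, pow_succ', mul_assoc]

lemma x_mul_vb (i : Fin n) (e : ℕ) (j : Fin n) :
    xgen k n f i * vb k n f e j = vb k n f (e + 1) j := by
  cases e with
  | zero => rw [vb_zero, vb, pow_one, xgen_mul]
  | succ e =>
    rw [vb_succ, ← mul_assoc, xgen_mul k n f i 0, mul_assoc, ← vb_succ, ← vb_succ]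

lemma vb_mul (d : ℕ) (i : Fin n) (e : ℕ) (j : Fin n) :
    vb k n f d i * vb k n f e j = vb k n f (d + e + 1) j := by
  rw [vb, mul_assoc, x_mul_vb, vb, vb, ← mul_assoc, ← pow_add, ← Nat.add_assoc]

/-- Images of the generators in the model. -/
def gens (i : Fin n) : Mdl k n := ⟨0, fun j => if j = i then 1 else 0⟩

lemma sig_gens (i : Fin n) : Mdl.sig (gens k n i) = 1 := by
  simp [Mdl.sig, gens]

lemma gens_mul (i j : Fin n) :
    gens k n i * gens k n j = ⟨0, fun l => X * (if l = j then 1 else 0)⟩ := by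
  refine Mdl.ext ?_ fun l => ?_
  · simp [gens]
  · rw [Mdl.mul_R, sig_gens]
    simp [gens]

/-- The algebra map from the Yang–Baxter algebra to the model. -/
def phi : YBA k n f →ₐ[k] Mdl k n :=
  RingQuot.liftAlgHom k ⟨FreeAlgebra.lift k (gens k n), by
    rintro a b ⟨j, p, rfl, rfl⟩
    simp only [map_mul, FreeAlgebra.lift_ι_apply, gens_mul]⟩

@[simp] lemma phi_x (i : Fin n) : phi k n f (xgen k n f i) = gens k n i := by
  rw [xgen, phi, RingQuot.liftAlgHom_mkAlgHom_apply, FreeAlgebra.lift_ι_apply]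

lemma phi_vb (d : ℕ) (i : Fin n) :
    phi k n f (vb k n f d i) = ⟨0, fun j => if j = i then X ^ d else 0⟩ := by
  induction d with
  | zero =>
    rw [vb_zero, phi_x]
    refine Mdl.ext rfl fun j => ?_
    simp [gens]
  | succ d ih =>
    rw [vb_succ, map_mul, phi_x, ih]
    refine Mdl.ext (by simp [gens]) fun j => ?_
    rw [Mdl.mul_R, sig_gens]
    simp only [gens, Mdl.mk_c, Mdl.mk_R]
    by_cases hj : j = i <;> simp [hj, pow_succ] <;> ring

lemma sig_phi_vb (d : ℕ) (i : Fin n) :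
    Mdl.sig (phi k n f (vb k n f d i)) = X ^ d := by
  rw [phi_vb]
  simp [Mdl.sig]

lemma vb_def (d : ℕ) (i : Fin n) :
    xgen k n f 0 ^ d * xgen k n f i = vb k n f d i := rfl

/-- Interpretation of a single polynomial column back in the Yang–Baxter algebra. -/
def toFinsuppL : Polynomial k →ₗ[k] (ℕ →₀ k) where
  toFun p := p.toFinsupp.coeff
  map_add' p q := by rw [Polynomial.toFinsupp_add]; rfl
  map_smul' c p := by rw [Polynomial.toFinsupp_smul]; rfl

def psiCol (i : Fin n) : Polynomial k →ₗ[k] YBA k n f :=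
  (Finsupp.lift (YBA k n f) k ℕ fun d => vb k n f d i).comp (toFinsuppL k)

lemma psiCol_apply (i : Fin n) (q : Polynomial k) :
    psiCol k n f i q = q.toFinsupp.coeff.sum fun d c => c • vb k n f d i := by
  rw [psiCol, LinearMap.comp_apply, Finsupp.lift_apply]
  rfl

lemma psiCol_X_pow (i : Fin n) (d : ℕ) :
    psiCol k n f i ((Polynomial.X : Polynomial k) ^ d) = vb k n f d i := by
  rw [psiCol_apply, Polynomial.X_pow_eq_monomial, Polynomial.toFinsupp_monomial, AddMonoidAlgebra.coeff_single,
    Finsupp.sum_single_index (by rw [zero_smul]), one_smul]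

/-- The inverse map, defined from the normal basis. -/
def psi (m : Mdl k n) : YBA k n f :=
  algebraMap k (YBA k n f) m.c + ∑ i, psiCol k n f i (m.R i)

lemma psi_zero : psi k n f 0 = 0 := by
  simp [psi]

lemma psi_one : psi k n f 1 = 1 := by
  simp [psi]

lemma psi_add (m m' : Mdl k n) : psi k n f (m + m') = psi k n f m + psi k n f m' := by
  simp only [psi, Mdl.add_c, Mdl.add_R, map_add, Finset.sum_add_distrib]
  abel

lemma psi_smul (a : k) (m : Mdl k n) : psi k n f (a • m) = a • psi k n f m := by
  simp only [psi, Mdl.smul_c, Mdl.smul_R, ← Polynomial.smul_eq_C_mul, map_smul,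
    ← Finset.smul_sum, smul_add]
  congr 1
  rw [Algebra.smul_def, ← map_mul]

lemma psi_mk_ite (d : ℕ) (i : Fin n) :
    psi k n f ⟨0, fun j => if j = i then Polynomial.X ^ d else 0⟩ = vb k n f d i := by
  simp only [psi, Mdl.mk_c, Mdl.mk_R, map_zero, zero_add]
  rw [Finset.sum_eq_single i]
  · rw [if_pos rfl, psiCol_X_pow]
  · intro j _ hj
    rw [if_neg hj, map_zero]
  · intro hi
    exact absurd (Finset.mem_univ i) hi

/-- The submodule spanned by the normal basis. -/
def W : Submodule k (YBA k n f) :=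
  Submodule.span k ({1} ∪ Set.range fun q : ℕ × Fin n => vb k n f q.1 q.2)

lemma one_mem_W : (1 : YBA k n f) ∈ W k n f :=
  Submodule.subset_span (Or.inl rfl)

lemma vb_mem_W (d : ℕ) (i : Fin n) : vb k n f d i ∈ W k n f :=
  Submodule.subset_span (Or.inr ⟨(d, i), rfl⟩)

lemma mul_vb_mem_W {a : YBA k n f} (ha : a ∈ W k n f) (e : ℕ) (j : Fin n) :
    a * vb k n f e j ∈ W k n f := by
  induction ha using Submodule.span_induction with
  | mem x hx =>
    simp only [Set.mem_union, Set.mem_singleton_iff, Set.mem_range] at hx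
    rcases hx with rfl | ⟨⟨d, i⟩, rfl⟩
    · rw [one_mul]; exact vb_mem_W k n f e j
    · rw [vb_mul]; exact vb_mem_W k n f _ j
  | zero => rw [zero_mul]; exact Submodule.zero_mem _
  | add x y hx hy ihx ihy => rw [add_mul]; exact Submodule.add_mem _ ihx ihy
  | smul c x hx ih => rw [smul_mul_assoc]; exact Submodule.smul_mem _ c ih

lemma mul_mem_W {a b : YBA k n f} (ha : a ∈ W k n f) (hb : b ∈ W k n f) :
    a * b ∈ W k n f := by
  induction hb using Submodule.span_induction with
  | mem y hy =>
    simp only [Set.mem_union, Set.mem_singleton_iff, Set.mem_range] at hy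
    rcases hy with rfl | ⟨⟨e, j⟩, rfl⟩
    · rw [mul_one]; exact ha
    · exact mul_vb_mem_W k n f ha e j
  | zero => rw [mul_zero]; exact Submodule.zero_mem _
  | add x y hx hy ihx ihy => rw [mul_add]; exact Submodule.add_mem _ ihx ihy
  | smul c x hx ih => rw [mul_smul_comm]; exact Submodule.smul_mem _ c ih

lemma mem_W (a : YBA k n f) : a ∈ W k n f := by
  obtain ⟨y, rfl⟩ := RingQuot.mkAlgHom_surjective k (ybRel k n f) a
  induction y using FreeAlgebra.induction with
  | grade0 r =>
    rw [AlgHom.commutes, Algebra.algebraMap_eq_smul_one]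
    exact Submodule.smul_mem _ r (one_mem_W k n f)
  | grade1 i =>
    have : RingQuot.mkAlgHom k (ybRel k n f) (ι k i) = vb k n f 0 i :=
      (vb_zero k n f i).symm
    rw [this]
    exact vb_mem_W k n f 0 i
  | mul x y hx hy => rw [map_mul]; exact mul_mem_W k n f hx hy
  | add x y hx hy => rw [map_add]; exact Submodule.add_mem _ hx hy

lemma psi_phi (a : YBA k n f) : psi k n f (phi k n f a) = a := by
  have h := mem_W k n f a
  induction h using Submodule.span_induction with
  | mem x hx =>
    simp only [Set.mem_union, Set.mem_singleton_iff, Set.mem_range] at hx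
    rcases hx with rfl | ⟨⟨d, i⟩, rfl⟩
    · rw [map_one, psi_one]
    · rw [phi_vb, psi_mk_ite]
  | zero => rw [map_zero, psi_zero]
  | add x y hx hy ihx ihy => rw [map_add, psi_add, ihx, ihy]
  | smul c x hx ih => rw [map_smul, psi_smul, ih]

lemma phi_injective : Function.Injective (phi k n f) := by
  intro a b h
  rw [← psi_phi k n f a, h, psi_phi]

lemma phi_eq_zero_iff {a : YBA k n f} : phi k n f a = 0 ↔ a = 0 := by
  constructor
  · intro h
    exact phi_injective k n f (by rw [h, map_zero])
  · rintro rfl; rw [map_zero]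

/-! ### The augmentation ideal -/

lemma xgen_mem_Aplus (i : Fin n) : xgen k n f i ∈ Aplus k n f :=
  TwoSidedIdeal.subset_span ⟨i, rfl⟩

lemma vb_mem_Aplus (d : ℕ) (i : Fin n) : vb k n f d i ∈ Aplus k n f :=
  TwoSidedIdeal.mul_mem_left _ _ _ (xgen_mem_Aplus k n f i)

lemma mem_Aplus_of_c {a : YBA k n f} (h : (phi k n f a).c = 0) : a ∈ Aplus k n f := by
  rw [← psi_phi k n f a, psi, h, map_zero, zero_add]
  refine TwoSidedIdeal.finsetSum_mem _ _ _ fun i _ => ?_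
  rw [psiCol_apply, Finsupp.sum]
  refine TwoSidedIdeal.finsetSum_mem _ _ _ fun d _ => ?_
  rw [Algebra.smul_def]
  exact TwoSidedIdeal.mul_mem_left _ _ _ (vb_mem_Aplus k n f d i)

/-- The kernel of the scalar component, as a two-sided ideal. -/
def Kc : TwoSidedIdeal (YBA k n f) :=
  TwoSidedIdeal.mk' {a | (phi k n f a).c = 0}
    (by simp only [Set.mem_setOf_eq, map_zero, Mdl.zero_c])
    (fun {x y} hx hy => by
      simp only [Set.mem_setOf_eq, map_add, Mdl.add_c] at *
      rw [hx, hy, add_zero])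
    (fun {x} hx => by
      simp only [Set.mem_setOf_eq, map_neg, Mdl.neg_c] at *
      rw [hx, neg_zero])
    (fun {x y} hy => by
      simp only [Set.mem_setOf_eq, map_mul, Mdl.mul_c] at *
      rw [hy, mul_zero])
    (fun {x y} hx => by
      simp only [Set.mem_setOf_eq, map_mul, Mdl.mul_c] at *
      rw [hx, zero_mul])

lemma c_eq_zero_of_mem_Aplus {a : YBA k n f} (h : a ∈ Aplus k n f) :
    (phi k n f a).c = 0 := by
  have hmem : a ∈ Kc k n f := by
    refine TwoSidedIdeal.mem_span_iff.mp h (Kc k n f) ?_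
    rintro _ ⟨i, rfl⟩
    show xgen k n f i ∈ Kc k n f
    rw [Kc, TwoSidedIdeal.mem_mk']
    show (phi k n f (xgen k n f i)).c = 0
    rw [phi_x]
    rfl
  rw [Kc, TwoSidedIdeal.mem_mk'] at hmem
  exact hmem

/-- The two functionals of a normal-form representation. -/
lemma c_phi_rep (a₀ : k) (p : ℕ) (α : ℕ → Fin n → k) :
    (phi k n f (algebraMap k (YBA k n f) a₀ +
        ∑ d ∈ Finset.Icc 1 p, ∑ i, α d i • (xgen k n f 0 ^ (d - 1) * xgen k n f i))).c
      = a₀ := by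
  simp only [vb_def, map_add, map_sum, map_smul, AlgHom.commutes, Mdl.add_c]
  rw [Mdl.algebraMap_c]
  have : ∀ (m : Type) , True := fun _ => trivial
  have hsum : (∑ d ∈ Finset.Icc 1 p, ∑ i, α d i • phi k n f (vb k n f (d-1) i)).c = 0 := by
    rw [show (∑ d ∈ Finset.Icc 1 p, ∑ i, α d i • phi k n f (vb k n f (d-1) i)).c
        = Mdl.cHom (∑ d ∈ Finset.Icc 1 p, ∑ i, α d i • phi k n f (vb k n f (d-1) i)) from rfl]
    rw [map_sum]
    refine Finset.sum_eq_zero fun d _ => ?_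
    rw [map_sum]
    refine Finset.sum_eq_zero fun i _ => ?_
    show (α d i • phi k n f (vb k n f (d-1) i)).c = 0
    rw [Mdl.smul_c, phi_vb, Mdl.mk_c, mul_zero]
  rw [hsum, add_zero]

lemma sig_phi_rep (a₀ : k) (p : ℕ) (α : ℕ → Fin n → k) :
    Mdl.sig (phi k n f (algebraMap k (YBA k n f) a₀ +
        ∑ d ∈ Finset.Icc 1 p, ∑ i, α d i • (xgen k n f 0 ^ (d - 1) * xgen k n f i)))
      = ∑ d ∈ Finset.Icc 1 p, (∑ i, α d i) • (Polynomial.X : Polynomial k) ^ (d - 1) := by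
  simp only [vb_def, map_add, map_sum, map_smul, AlgHom.commutes]
  rw [show ∀ m : Mdl k n, Mdl.sig m = Mdl.sigHom m from fun m => rfl]
  rw [map_add, map_sum]
  have h0 : Mdl.sigHom (algebraMap k (Mdl k n) a₀) = 0 := Mdl.sig_algebraMap a₀
  rw [h0, zero_add]
  refine Finset.sum_congr rfl fun d _ => ?_
  rw [map_sum, Finset.sum_smul]
  refine Finset.sum_congr rfl fun i _ => ?_
  rw [map_smul]
  congr 1
  show Mdl.sig (phi k n f (vb k n f (d-1) i)) = _
  rw [sig_phi_vb]

lemma rowsum_eq_zero {p : ℕ} {α : ℕ → Fin n → k}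
    (h : ∑ d ∈ Finset.Icc 1 p, (∑ i, α d i) • (Polynomial.X : Polynomial k) ^ (d - 1) = 0) :
    ∀ d : ℕ, 1 ≤ d → d ≤ p → ∑ i, α d i = 0 := by
  intro d h1 h2
  have hco := congrArg (fun q => Polynomial.coeff q (d - 1)) h
  simp only [Polynomial.finset_sum_coeff, Polynomial.coeff_smul, Polynomial.coeff_X_pow,
    Polynomial.coeff_zero, smul_eq_mul] at hco
  rw [Finset.sum_eq_single d] at hco
  · simpa using hco
  · intro d' hd' hne
    rw [Finset.mem_Icc] at hd'
    have : ¬ (d - 1 = d' - 1) := by omega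
    simp [this]
  · intro hd
    exact absurd (Finset.mem_Icc.mpr ⟨h1, h2⟩) hd

/-- An element whose image has zero scalar part and zero column sum annihilates `A⁺`. -/
lemma annih {a : YBA k n f} (hc : (phi k n f a).c = 0) (hs : Mdl.sig (phi k n f a) = 0) :
    ∀ b ∈ Aplus k n f, a * b = 0 := by
  intro b hb
  apply phi_injective k n f
  rw [map_mul, map_zero]
  refine Mdl.ext ?_ fun j => ?_
  · rw [Mdl.mul_c, hc, zero_mul, Mdl.zero_c]
  · rw [Mdl.mul_R, hc, hs, c_eq_zero_of_mem_Aplus k n f hb, Mdl.zero_R]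
    simp

end YBAlemmas

/-- (1) if `a b = 0` with `a, b ≠ 0` then `a, b ∈ A⁺` and in any
normal-basis representation `a = a₀ + Σ_{d=1}^{p} Σᵢ α_{d i} x₁^{d−1} xᵢ` one has
`a₀ = 0` and `Σᵢ α_{d i} = 0` for every `1 ≤ d ≤ p`; (2) conversely such an `a`
annihilates `A⁺` from the left; in particular a nonzero `a` is a left zero divisor
iff it annihilates `A⁺`. -/
theorem stmt_14 (k : Type*) [Field k] (n : ℕ) [NeZero n] (f : Equiv.Perm (Fin n)) :
    (∀ a b : YBA k n f, a ≠ 0 → b ≠ 0 → a * b = 0 →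
      a ∈ Aplus k n f ∧ b ∈ Aplus k n f ∧
      ∀ (a₀ : k) (p : ℕ) (α : ℕ → Fin n → k),
        a = algebraMap k (YBA k n f) a₀ +
            ∑ d ∈ Finset.Icc 1 p, ∑ i, α d i • ((xgen k n f 0) ^ (d - 1) * xgen k n f i) →
        a₀ = 0 ∧ ∀ d : ℕ, 1 ≤ d → d ≤ p → ∑ i, α d i = 0) ∧
    (∀ (p : ℕ) (α : ℕ → Fin n → k),
      (∀ d : ℕ, 1 ≤ d → d ≤ p → ∑ i, α d i = 0) →
      ∀ b ∈ Aplus k n f,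
        (∑ d ∈ Finset.Icc 1 p, ∑ i, α d i • ((xgen k n f 0) ^ (d - 1) * xgen k n f i)) * b
          = 0) ∧
    (∀ a : YBA k n f, a ≠ 0 →
      ((∃ b : YBA k n f, b ≠ 0 ∧ a * b = 0) ↔ ∀ b ∈ Aplus k n f, a * b = 0)) := by
  refine ⟨?_, ?_, ?_⟩
  · -- part (1)
    intro a b ha hb hab
    have hpa : phi k n f a ≠ 0 := fun h => ha ((phi_eq_zero_iff k n f).mp h)
    have hpb : phi k n f b ≠ 0 := fun h => hb ((phi_eq_zero_iff k n f).mp h)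
    have hmul : phi k n f a * phi k n f b = 0 := by rw [← map_mul, hab, map_zero]
    obtain ⟨hac, hbc, hsig⟩ := Mdl.key hmul hpa hpb
    refine ⟨mem_Aplus_of_c k n f hac, mem_Aplus_of_c k n f hbc, ?_⟩
    intro a₀ p α hrep
    constructor
    · rw [← c_phi_rep k n f a₀ p α, ← hrep]
      exact hac
    · refine rowsum_eq_zero k n ?_
      rw [← sig_phi_rep k n f a₀ p α, ← hrep]
      exact hsig
  · -- part (2)
    intro p α hα b hb
    have hrep : (∑ d ∈ Finset.Icc 1 p, ∑ i, α d i • ((xgen k n f 0) ^ (d - 1) * xgen k n f i))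
        = algebraMap k (YBA k n f) 0 +
          ∑ d ∈ Finset.Icc 1 p, ∑ i, α d i • ((xgen k n f 0) ^ (d - 1) * xgen k n f i) := by
      rw [map_zero, zero_add]
    have hc : (phi k n f (∑ d ∈ Finset.Icc 1 p,
        ∑ i, α d i • ((xgen k n f 0) ^ (d - 1) * xgen k n f i))).c = 0 := by
      rw [hrep]; exact c_phi_rep k n f 0 p α
    have hs : Mdl.sig (phi k n f (∑ d ∈ Finset.Icc 1 p,
        ∑ i, α d i • ((xgen k n f 0) ^ (d - 1) * xgen k n f i))) = 0 := by
      rw [hrep, sig_phi_rep k n f 0 p α]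
      refine Finset.sum_eq_zero fun d hd => ?_
      rw [Finset.mem_Icc] at hd
      rw [hα d hd.1 hd.2, zero_smul]
    exact annih k n f hc hs b hb
  · -- part (3)
    intro a ha
    constructor
    · rintro ⟨b, hb, hab⟩ b' hb'
      have hpa : phi k n f a ≠ 0 := fun h => ha ((phi_eq_zero_iff k n f).mp h)
      have hpb : phi k n f b ≠ 0 := fun h => hb ((phi_eq_zero_iff k n f).mp h)
      have hmul : phi k n f a * phi k n f b = 0 := by rw [← map_mul, hab, map_zero]
      obtain ⟨hac, _, hsig⟩ := Mdl.key hmul hpa hpb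
      exact annih k n f hac hsig b' hb'
    · intro h
      refine ⟨xgen k n f 0, ?_, h _ (xgen_mem_Aplus k n f 0)⟩
      intro h0
      have := congrArg (phi k n f) h0
      rw [phi_x, map_zero] at this
      have h1 := congrFun (congrArg Mdl.R this) 0
      rw [Mdl.zero_R] at h1
      simp only [gens, Mdl.mk_R, if_pos rfl] at h1
      exact one_ne_zero h1

end
end
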